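/- Let 𝒜 = diag(α_1,…,α_n). For every y ∈ ℝⁿ and every integer vector z ∈ ℤⁿ, the SIC quantizer satisfies the lattice equivariance c_SIC(y + U·𝒜·z) = 𝒜·z + c_SIC(y). -/

import Mathlib

open Finset

/-- The SIC (successive interference cancellation) quantizer with respect to an
upper-triangular matrix `U` and per-coordinate spacings `α`, defined by backward
recursion `c_SIC(y)_i = α_i ⌊(y_i − Σ_{j>i} U_{i,j} c_SIC(y)_j)/(α_i U_{i,i}) + 1/2⌋`. -/
noncomputable def cSIC {n : ℕ} (U : Matrix (Fin n) (Fin n) ℝ) (α : Fin n → ℝ)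
    (y : Fin n → ℝ) : Fin n → ℝ
  | i =>
    α i * ((round ((y i - ∑ j ∈ (Finset.univ.filter fun j => i < j).attach,
        U i j.1 * cSIC U α y j.1) / (α i * U i i)) : ℤ) : ℝ)
termination_by i => n - i.1
decreasing_by
  have h := j.2
  simp only [Finset.mem_filter, Finset.mem_univ, true_and] at h
  have h2 : (j.1 : ℕ) < n := j.1.isLt
  have h3 : (i : ℕ) < (j.1 : ℕ) := h
  omega

/-- lattice equivariance of the SIC quantizer:
`c_SIC(y + U·𝒜·z) = 𝒜·z + c_SIC(y)` for every `z ∈ ℤⁿ`, where `𝒜 = diag(α)`. -/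
theorem sic_lattice_equivariance {n : ℕ} (hn : 1 ≤ n)
    (U : Matrix (Fin n) (Fin n) ℝ)
    (hUtri : ∀ i j : Fin n, j < i → U i j = 0)
    (hUdiag : ∀ i : Fin n, 0 < U i i)
    (α : Fin n → ℝ) (hα : ∀ i : Fin n, 0 < α i)
    (y : Fin n → ℝ) (z : Fin n → ℤ) :
    cSIC U α (y + U.mulVec (fun i => α i * (z i : ℝ))) =
      (fun i => α i * (z i : ℝ)) + cSIC U α y := by
  set y' := y + U.mulVec (fun i => α i * (z i : ℝ)) with hy'def
  have key : ∀ m : ℕ, ∀ i : Fin n, n - i.1 ≤ m →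
      cSIC U α y' i = α i * (z i : ℝ) + cSIC U α y i := by
    intro m
    induction m with
    | zero =>
      intro i h
      exact absurd h (by have := i.isLt; omega)
    | succ m ih =>
      intro i hi
      have hsum : ∑ j ∈ (Finset.univ.filter fun j => i < j).attach,
          U i j.1 * cSIC U α y' j.1
          = ∑ j ∈ (Finset.univ.filter fun j => i < j).attach,
          U i j.1 * (α j.1 * (z j.1 : ℝ) + cSIC U α y j.1) := by
        apply Finset.sum_congr rfl
        intro j _
        have hj := j.2
        simp only [Finset.mem_filter, Finset.mem_univ, true_and] at hj
        rw [ih j.1 (by have := j.1.isLt; have : (i:ℕ) < j.1 := hj; omega)]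
      have hyi : y' i = y i + U i i * (α i * (z i : ℝ))
          + ∑ j ∈ Finset.univ.filter (fun j => i < j), U i j * (α j * (z j : ℝ)) := by
        have : y' i = y i + ∑ j, U i j * (α j * (z j : ℝ)) := by
          simp [hy'def, Matrix.mulVec, dotProduct]
        rw [this]
        have hsplit : ∑ j, U i j * (α j * (z j : ℝ)) =
            (∑ j ∈ Finset.univ.filter (fun j => i < j), U i j * (α j * (z j : ℝ)))
            + ∑ j ∈ Finset.univ.filter (fun j => ¬ i < j), U i j * (α j * (z j : ℝ)) := by
          rw [Finset.sum_filter_add_sum_filter_not]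
        have hrest : ∑ j ∈ Finset.univ.filter (fun j => ¬ i < j),
            U i j * (α j * (z j : ℝ)) = U i i * (α i * (z i : ℝ)) := by
          apply Finset.sum_eq_single_of_mem
          · simp
          · intro j hj hne
            simp only [Finset.mem_filter, Finset.mem_univ, true_and, not_lt] at hj
            have : j < i := lt_of_le_of_ne hj hne
            rw [hUtri i j this, zero_mul]
        rw [hsplit, hrest]
        ring
      rw [cSIC, cSIC, hsum]
      have hnum : y' i - ∑ j ∈ (Finset.univ.filter fun j => i < j).attach,
          U i j.1 * (α j.1 * (z j.1 : ℝ) + cSIC U α y j.1)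
          = U i i * (α i * (z i : ℝ)) +
            (y i - ∑ j ∈ (Finset.univ.filter fun j => i < j).attach,
              U i j.1 * cSIC U α y j.1) := by
        rw [hyi]
        rw [Finset.sum_attach _ (fun j => U i j * (α j * (z j : ℝ) + cSIC U α y j)),
            Finset.sum_attach _ (fun j => U i j * cSIC U α y j)]
        rw [show (∑ j ∈ Finset.univ.filter (fun j => i < j),
            U i j * (α j * (z j : ℝ) + cSIC U α y j)) =
            (∑ j ∈ Finset.univ.filter (fun j => i < j), U i j * (α j * (z j : ℝ)))
            + ∑ j ∈ Finset.univ.filter (fun j => i < j), U i j * cSIC U α y j by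
          rw [← Finset.sum_add_distrib]; apply Finset.sum_congr rfl; intros; ring]
        ring
      rw [hnum]
      have hpos : α i * U i i ≠ 0 := mul_ne_zero (hα i).ne' (hUdiag i).ne'
      have hdiv : (U i i * (α i * (z i : ℝ)) +
          (y i - ∑ j ∈ (Finset.univ.filter fun j => i < j).attach,
            U i j.1 * cSIC U α y j.1)) / (α i * U i i)
          = (z i : ℝ) + (y i - ∑ j ∈ (Finset.univ.filter fun j => i < j).attach,
            U i j.1 * cSIC U α y j.1) / (α i * U i i) := by
        rw [add_div]; congr 1; rw [div_eq_iff hpos]; ring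
      rw [hdiv, round_intCast_add]
      push_cast
      ring
  funext i
  have := key n i (by omega)
  simpa using this
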